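/- arXiv:2111.08199 — 2 statements merged into one kernel-verified Lean document; each statement's English description precedes it below -/
import Mathlib

section
/- For every sequence a = (a_i)_{i≥1} ∈ C = ∏_{i≥1} [2^{−2i}, 2^{−2i+1}] (with the convention a_0 = 1), the function R[a] on Υ = {(0,0)} ∪ ((0,1] × ℤ_{≥0}), defined for points s_i = (s,i) and t_j = (t,j) by R[a](s_i, t_j) = a_i·|s − t| if i = j and R[a](s_i, t_j) = a_i·s + a_j·t if i ≠ j, is a metric on Υ, and the metric space (Υ, R[a]) is compact and is a CAT(0) (in particular geodesic) space. -/
/-- The set `Υ = {(0,0)} ∪ ((0,1] × ℤ_{≥0})`, an element `(s, i)` being the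
point at parameter `s` on the `i`-th edge. -/
def Upsilon : Type := {p : ℝ × ℕ // p = (0, 0) ∨ (0 < p.1 ∧ p.1 ≤ 1)}

/-- The distance function `R[a]` on `Υ`:
`R[a]((s,i), (t,j)) = a i * |s - t|` if `i = j`, and
`R[a]((s,i), (t,j)) = a i * s + a j * t` otherwise. -/
noncomputable def Rmet (a : ℕ → ℝ) (p q : Upsilon) : ℝ :=
  if p.1.2 = q.1.2 then a p.1.2 * |p.1.1 - q.1.1|
  else a p.1.2 * p.1.1 + a q.1.2 * q.1.1

/-- Membership in `C = ∏_{i ≥ 1} [2^{-2i}, 2^{-2i+1}]`, together with the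
convention `a 0 = 1`. -/
def MemC (a : ℕ → ℝ) : Prop :=
  a 0 = 1 ∧ ∀ i : ℕ, 1 ≤ i →
    a i ∈ Set.Icc ((2 : ℝ) ^ (-(2 * (i : ℤ)))) ((2 : ℝ) ^ (-(2 * (i : ℤ)) + 1))

/-- A metric space is *geodesic* if any two points `x, y` are joined by a
geodesic, i.e. a map `γ : [0,1] → X` with `γ 0 = x`, `γ 1 = y` and
`dist (γ s) (γ t) = |s - t| * dist x y`. -/
def IsGeodesicSpace (X : Type*) [MetricSpace X] : Prop :=
  ∀ x y : X, ∃ γ : ℝ → X, γ 0 = x ∧ γ 1 = y ∧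
    ∀ s ∈ Set.Icc (0 : ℝ) 1, ∀ t ∈ Set.Icc (0 : ℝ) 1,
      dist (γ s) (γ t) = |s - t| * dist x y

/-- A metric space is *CAT(0)* if it is geodesic and every geodesic triangle
satisfies the Euclidean comparison inequality; equivalently (the formulation
used here), the comparison (CN) inequality holds along every geodesic. -/
def IsCAT0Space (X : Type*) [MetricSpace X] : Prop :=
  IsGeodesicSpace X ∧
  ∀ x y z : X, ∀ γ : ℝ → X, γ 0 = x → γ 1 = y →
    (∀ s ∈ Set.Icc (0 : ℝ) 1, ∀ t ∈ Set.Icc (0 : ℝ) 1,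
      dist (γ s) (γ t) = |s - t| * dist x y) →
    ∀ t ∈ Set.Icc (0 : ℝ) 1,
      dist z (γ t) ^ 2 ≤
        (1 - t) * dist z x ^ 2 + t * dist z y ^ 2 - t * (1 - t) * dist x y ^ 2


/-! ### Auxiliary constructions and lemmas -/

/-- The origin of `Υ`. -/
def UO : Upsilon := ⟨(0,0), Or.inl rfl⟩

/-- The point at parameter `u` on edge `i` (sent to the origin when `u` is
outside `(0,1]`). -/
noncomputable def Upt (i : ℕ) (u : ℝ) : Upsilon :=
  if h : 0 < u ∧ u ≤ 1 then ⟨(u,i), Or.inr h⟩ else UO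

lemma coord_nonneg (p : Upsilon) : 0 ≤ p.1.1 := by
  rcases p.2 with h | h
  · simp [h]
  · exact le_of_lt h.1

lemma coord_le_one (p : Upsilon) : p.1.1 ≤ 1 := by
  rcases p.2 with h | h
  · simp [h]
  · exact h.2

lemma Upt_fst {i : ℕ} {u : ℝ} (h0 : 0 < u) (h1 : u ≤ 1) : (Upt i u).1 = (u, i) := by
  rw [show Upt i u = ⟨(u, i), Or.inr ⟨h0, h1⟩⟩ from dif_pos ⟨h0, h1⟩]

lemma Upt_zero (i : ℕ) : Upt i 0 = UO := by
  exact dif_neg (by norm_num)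

lemma UO_fst : (UO).1 = ((0:ℝ), (0:ℕ)) := rfl

lemma Upt_self (x : Upsilon) : Upt x.1.2 x.1.1 = x := by
  rcases x.2 with h | h
  · apply Subtype.ext
    rw [show Upt x.1.2 x.1.1 = UO from dif_neg ?_]
    · rw [UO_fst, h]
    · rw [h]; norm_num
  · apply Subtype.ext
    rw [show Upt x.1.2 x.1.1 = ⟨(x.1.1, x.1.2), Or.inr h⟩ from dif_pos h]

lemma Rmet_pt (a : ℕ → ℝ) {i j : ℕ} {u v : ℝ} (hu0 : 0 ≤ u) (hu1 : u ≤ 1) (hv0 : 0 ≤ v)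
    (hv1 : v ≤ 1) :
    Rmet a (Upt i u) (Upt j v) = if i = j then a i * |u - v| else a i * u + a j * v := by
  rcases eq_or_lt_of_le hu0 with hu | hu <;> rcases eq_or_lt_of_le hv0 with hv | hv
  · subst hu; subst hv
    rw [Upt_zero, Upt_zero]
    simp only [Rmet, UO_fst]
    norm_num
  · subst hu
    rw [Upt_zero]
    simp only [Rmet, UO_fst, Upt_fst hv hv1]
    have hav : |(0:ℝ) - v| = v := by rw [zero_sub, abs_neg, abs_of_pos hv]
    split_ifs with h1 h2 h2
    · rw [hav, h2, ← h1]
    · rw [hav, ← h1]; ring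
    · rw [hav, h2]; ring
    · ring
  · subst hv
    rw [Upt_zero]
    simp only [Rmet, UO_fst, Upt_fst hu hu1]
    have hav : |u - (0:ℝ)| = u := by rw [sub_zero, abs_of_pos hu]
    split_ifs with h1 h2 h2 <;> try rw [hav]
    all_goals ring
  · simp only [Rmet, Upt_fst hu hu1, Upt_fst hv hv1]

lemma Rmet_o (a : ℕ → ℝ) (x : Upsilon) : Rmet a x UO = a x.1.2 * x.1.1 := by
  rw [Rmet, UO_fst]
  split_ifs with h
  · rw [show (((0:ℝ),(0:ℕ)) : ℝ × ℕ).1 = (0:ℝ) from rfl, sub_zero,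
      abs_of_nonneg (coord_nonneg x)]
  · rw [show (((0:ℝ),(0:ℕ)) : ℝ × ℕ).1 = (0:ℝ) from rfl]
    ring

/-- height of a point: its distance to the origin -/
noncomputable def UH (a : ℕ → ℝ) (p : Upsilon) : ℝ := a p.1.2 * p.1.1

lemma UH_nonneg (a : ℕ → ℝ) (hpos : ∀ i, 0 < a i) (p : Upsilon) : 0 ≤ UH a p :=
  mul_nonneg (le_of_lt (hpos _)) (coord_nonneg p)

lemma Rmet_eq (a : ℕ → ℝ) (hpos : ∀ i, 0 < a i) (p q : Upsilon) :
    Rmet a p q = if p.1.2 = q.1.2 then |UH a p - UH a q| else UH a p + UH a q := by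
  rw [Rmet, UH, UH]
  split_ifs with h
  · rw [h, ← mul_sub, abs_mul, abs_of_pos (hpos _)]
  · rfl

lemma Rmet_self (a : ℕ → ℝ) (p : Upsilon) : Rmet a p p = 0 := by
  simp [Rmet]

lemma Rmet_comm (a : ℕ → ℝ) (p q : Upsilon) : Rmet a p q = Rmet a q p := by
  rw [Rmet, Rmet]
  by_cases h : p.1.2 = q.1.2
  · rw [if_pos h, if_pos h.symm, h, abs_sub_comm]
  · rw [if_neg h, if_neg (Ne.symm h), add_comm]

lemma tri_aux (i j k : ℕ) (x y z : ℝ) (hx : 0 ≤ x) (hy : 0 ≤ y) (hz : 0 ≤ z) :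
    (if i = j then |x - y| else x + y) ≤
      (if i = k then |x - z| else x + z) + (if k = j then |z - y| else z + y) := by
  split_ifs <;>
    first
      | (exfalso; omega)
      | (rcases abs_cases (x - y) with ⟨h1, h1'⟩ | ⟨h1, h1'⟩ <;>
         rcases abs_cases (x - z) with ⟨h2, h2'⟩ | ⟨h2, h2'⟩ <;>
         rcases abs_cases (z - y) with ⟨h3, h3'⟩ | ⟨h3, h3'⟩ <;> linarith)

lemma Rmet_triangle (a : ℕ → ℝ) (hpos : ∀ i, 0 < a i) (p q r : Upsilon) :
    Rmet a p q ≤ Rmet a p r + Rmet a r q := by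
  rw [Rmet_eq a hpos, Rmet_eq a hpos, Rmet_eq a hpos]
  exact tri_aux _ _ _ _ _ _ (UH_nonneg a hpos p) (UH_nonneg a hpos q) (UH_nonneg a hpos r)

lemma Rmet_eq_zero (a : ℕ → ℝ) (hpos : ∀ i, 0 < a i) (p q : Upsilon)
    (h : Rmet a p q = 0) : p = q := by
  rw [Rmet] at h
  split_ifs at h with hij
  · apply Subtype.ext
    have habs : |p.1.1 - q.1.1| = 0 := by
      rcases mul_eq_zero.1 h with h' | h'
      · exact absurd h' (ne_of_gt (hpos _))
      · exact h'
    have h2 : p.1.1 = q.1.1 := by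
      have := abs_eq_zero.1 habs; linarith
    exact Prod.ext h2 hij
  · exfalso
    have h1 : a p.1.2 * p.1.1 = 0 ∧ a q.1.2 * q.1.1 = 0 := by
      constructor <;> nlinarith [mul_nonneg (le_of_lt (hpos p.1.2)) (coord_nonneg p),
        mul_nonneg (le_of_lt (hpos q.1.2)) (coord_nonneg q)]
    have hp1 : p.1.1 = 0 := by
      rcases mul_eq_zero.1 h1.1 with h' | h'
      · exact absurd h' (ne_of_gt (hpos _))
      · exact h'
    have hq1 : q.1.1 = 0 := by
      rcases mul_eq_zero.1 h1.2 with h' | h'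
      · exact absurd h' (ne_of_gt (hpos _))
      · exact h'
    have hp : p.1 = (0, 0) := by
      rcases p.2 with h' | h'
      · exact h'
      · exact absurd hp1 (ne_of_gt h'.1)
    have hq : q.1 = (0, 0) := by
      rcases q.2 with h' | h'
      · exact h'
      · exact absurd hq1 (ne_of_gt h'.1)
    apply hij
    rw [hp, hq]

/-- The metric space structure on `Υ` induced by `R[a]`. -/
noncomputable def upsMS (a : ℕ → ℝ) (hpos : ∀ i, 0 < a i) : MetricSpace Upsilon where
  dist := Rmet a
  dist_self := Rmet_self a
  dist_comm := Rmet_comm a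
  dist_triangle p q r := Rmet_triangle a hpos p r q
  eq_of_dist_eq_zero := Rmet_eq_zero a hpos _ _

lemma upsMS_dist (a : ℕ → ℝ) (hpos : ∀ i, 0 < a i) (p q : Upsilon) :
    @dist Upsilon (upsMS a hpos).toPseudoMetricSpace.toDist p q = Rmet a p q := rfl

/-! ### The four-point (0-hyperbolicity) inequality -/

lemma Labs (x y : ℝ) (hx : 0 ≤ x) (hy : 0 ≤ y) : |x - y| ≤ x + y :=
  abs_le.2 ⟨by linarith, by linarith⟩

lemma L1 (x y z w : ℝ) :
    |x - y| + |z - w| ≤ max (|x - z| + |y - w|) (|x - w| + |y - z|) := by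
  rw [le_max_iff]
  rcases abs_cases (x - y) with ⟨h1, h1'⟩ | ⟨h1, h1'⟩ <;>
  rcases abs_cases (z - w) with ⟨h2, h2'⟩ | ⟨h2, h2'⟩ <;>
  rcases abs_cases (x - z) with ⟨h3, h3'⟩ | ⟨h3, h3'⟩ <;>
  rcases abs_cases (y - w) with ⟨h4, h4'⟩ | ⟨h4, h4'⟩ <;>
  rcases abs_cases (x - w) with ⟨h5, h5'⟩ | ⟨h5, h5'⟩ <;>
  rcases abs_cases (y - z) with ⟨h6, h6'⟩ | ⟨h6, h6'⟩ <;>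
  first | (left; linarith) | (right; linarith)

lemma L2w (x y z w : ℝ) (hx : 0 ≤ x) (hy : 0 ≤ y) (hz : 0 ≤ z) (hw : 0 ≤ w) :
    |x - y| + (z + w) ≤ max (|x - z| + (y + w)) ((x + w) + |y - z|) := by
  rw [le_max_iff]
  rcases abs_cases (x - y) with ⟨h1, h1'⟩ | ⟨h1, h1'⟩ <;>
  rcases abs_cases (x - z) with ⟨h3, h3'⟩ | ⟨h3, h3'⟩ <;>
  rcases abs_cases (y - z) with ⟨h6, h6'⟩ | ⟨h6, h6'⟩ <;>
  first | (left; linarith) | (right; linarith)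

lemma L3w (x y z w : ℝ) (hx : 0 ≤ x) (hy : 0 ≤ y) (hz : 0 ≤ z) (hw : 0 ≤ w) :
    |x - y| + (z + w) ≤ max ((x + z) + |y - w|) (|x - w| + (y + z)) := by
  rw [le_max_iff]
  rcases abs_cases (x - y) with ⟨h1, h1'⟩ | ⟨h1, h1'⟩ <;>
  rcases abs_cases (y - w) with ⟨h3, h3'⟩ | ⟨h3, h3'⟩ <;>
  rcases abs_cases (x - w) with ⟨h6, h6'⟩ | ⟨h6, h6'⟩ <;>
  first | (left; linarith) | (right; linarith)

lemma L4w (x y z w : ℝ) (hx : 0 ≤ x) (hy : 0 ≤ y) (hz : 0 ≤ z) (hw : 0 ≤ w) :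
    (x + y) + |z - w| ≤ max (|x - z| + (y + w)) (|x - w| + (y + z)) := by
  rw [le_max_iff]
  rcases abs_cases (z - w) with ⟨h1, h1'⟩ | ⟨h1, h1'⟩ <;>
  rcases abs_cases (x - z) with ⟨h3, h3'⟩ | ⟨h3, h3'⟩ <;>
  rcases abs_cases (x - w) with ⟨h6, h6'⟩ | ⟨h6, h6'⟩ <;>
  first | (left; linarith) | (right; linarith)

lemma L5w (x y z w : ℝ) (hx : 0 ≤ x) (hy : 0 ≤ y) (hz : 0 ≤ z) (hw : 0 ≤ w) :
    (x + y) + |z - w| ≤ max ((x + z) + |y - w|) ((x + w) + |y - z|) := by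
  rw [le_max_iff]
  rcases abs_cases (z - w) with ⟨h1, h1'⟩ | ⟨h1, h1'⟩ <;>
  rcases abs_cases (y - w) with ⟨h3, h3'⟩ | ⟨h3, h3'⟩ <;>
  rcases abs_cases (y - z) with ⟨h6, h6'⟩ | ⟨h6, h6'⟩ <;>
  first | (left; linarith) | (right; linarith)

lemma four_aux (i j k l : ℕ) (x y z w : ℝ) (hx : 0 ≤ x) (hy : 0 ≤ y) (hz : 0 ≤ z)
    (hw : 0 ≤ w) :
    (if i = j then |x - y| else x + y) + (if k = l then |z - w| else z + w) ≤
      max ((if i = k then |x - z| else x + z) + (if j = l then |y - w| else y + w))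
          ((if i = l then |x - w| else x + w) + (if j = k then |y - z| else y + z)) := by
  by_cases h1 : i = j
  · subst h1
    by_cases h2 : k = l
    · subst h2
      by_cases h3 : i = k
      · subst h3
        simp only [if_pos rfl]
        exact L1 x y z w
      · rw [if_pos rfl, if_pos rfl, if_neg h3, if_neg h3, if_neg h3, if_neg h3]
        refine le_trans ?_ (le_max_left _ _)
        have := Labs x y hx hy
        have := Labs z w hz hw
        linarith
    · by_cases h3 : i = k
      · subst h3
        have h4 : ¬ i = l := h2
        rw [if_pos rfl, if_neg h2, if_pos rfl, if_neg h4, if_neg h4, if_pos rfl]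
        exact L2w x y z w hx hy hz hw
      · by_cases h4 : i = l
        · subst h4
          rw [if_pos rfl, if_neg h2, if_neg h3, if_pos rfl, if_pos rfl, if_neg h3]
          exact L3w x y z w hx hy hz hw
        · rw [if_pos rfl, if_neg h2, if_neg h3, if_neg h4, if_neg h4, if_neg h3]
          refine le_trans ?_ (le_max_left _ _)
          have := Labs x y hx hy
          linarith
  · by_cases h2 : k = l
    · subst h2
      by_cases h3 : i = k
      · subst h3
        have h5 : ¬ j = i := fun h => h1 h.symm
        rw [if_neg h1, if_pos rfl, if_pos rfl, if_neg h5, if_pos rfl, if_neg h5]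
        exact L4w x y z w hx hy hz hw
      · by_cases h5 : j = k
        · subst h5
          rw [if_neg h1, if_pos rfl, if_neg h3, if_pos rfl, if_neg h3, if_pos rfl]
          exact L5w x y z w hx hy hz hw
        · rw [if_neg h1, if_pos rfl, if_neg h3, if_neg h5, if_neg h3, if_neg h5]
          refine le_trans ?_ (le_max_left _ _)
          have := Labs z w hz hw
          linarith
    · rw [if_neg h1, if_neg h2]
      by_cases h3 : i = k
      · subst h3
        have h4 : ¬ i = l := h2
        have h5 : ¬ j = i := fun h => h1 h.symm
        rw [if_neg h4, if_neg h5]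
        refine le_trans ?_ (le_max_right _ _)
        linarith
      · by_cases h6 : j = l
        · subst h6
          have h4 : ¬ i = j := h1
          have h5 : ¬ j = k := fun h => h2 (h.symm.trans rfl)
          rw [if_neg h4, if_neg h5]
          refine le_trans ?_ (le_max_right _ _)
          linarith
        · rw [if_neg h3, if_neg h6]
          refine le_trans ?_ (le_max_left _ _)
          linarith

lemma Rmet_four (a : ℕ → ℝ) (hpos : ∀ i, 0 < a i) (p q r w : Upsilon) :
    Rmet a p q + Rmet a r w ≤
      max (Rmet a p r + Rmet a q w) (Rmet a p w + Rmet a q r) := by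
  rw [Rmet_eq a hpos p q, Rmet_eq a hpos r w, Rmet_eq a hpos p r, Rmet_eq a hpos q w,
    Rmet_eq a hpos p w, Rmet_eq a hpos q r]
  exact four_aux _ _ _ _ _ _ _ _ (UH_nonneg a hpos p) (UH_nonneg a hpos q)
    (UH_nonneg a hpos r) (UH_nonneg a hpos w)

/-! ### Geodesics -/

lemma exists_geo (a : ℕ → ℝ) (hpos : ∀ i, 0 < a i) (x y : Upsilon) :
    ∃ γ : ℝ → Upsilon, γ 0 = x ∧ γ 1 = y ∧
      ∀ s ∈ Set.Icc (0:ℝ) 1, ∀ t ∈ Set.Icc (0:ℝ) 1,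
        Rmet a (γ s) (γ t) = |s - t| * Rmet a x y := by
  obtain ⟨i, s, hx, hs0, hs1⟩ : ∃ i s, Upt i s = x ∧ 0 ≤ s ∧ s ≤ 1 :=
    ⟨x.1.2, x.1.1, Upt_self x, coord_nonneg x, coord_le_one x⟩
  obtain ⟨j, t, hy, ht0, ht1⟩ : ∃ j t, Upt j t = y ∧ 0 ≤ t ∧ t ≤ 1 :=
    ⟨y.1.2, y.1.1, Upt_self y, coord_nonneg y, coord_le_one y⟩
  by_cases hij : i = j
  · subst hij
    refine ⟨fun r => Upt i (s + r * (t - s)), ?_, ?_, ?_⟩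
    · show Upt i (s + 0 * (t - s)) = x
      rw [zero_mul, add_zero, hx]
    · show Upt i (s + 1 * (t - s)) = y
      rw [one_mul, show s + (t - s) = t by ring, hy]
    · intro r hr r' hr'
      have hb : ∀ u : ℝ, u ∈ Set.Icc (0:ℝ) 1 → 0 ≤ s + u * (t - s) ∧ s + u * (t - s) ≤ 1 := by
        intro u hu
        constructor
        · nlinarith [hu.1, hu.2, mul_nonneg hu.1 hs0, mul_nonneg hu.1 ht0]
        · nlinarith [hu.1, hu.2]
      obtain ⟨h1, h2⟩ := hb r hr
      obtain ⟨h3, h4⟩ := hb r' hr'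
      rw [Rmet_pt a h1 h2 h3 h4, if_pos rfl, ← hx, ← hy, Rmet_pt a hs0 hs1 ht0 ht1,
        if_pos rfl]
      rw [show s + r * (t - s) - (s + r' * (t - s)) = -((r - r') * (s - t)) by ring,
        abs_neg, abs_mul]
      ring
  · -- different edges
    set d : ℝ := a i * s + a j * t with hd
    have hdxy : Rmet a x y = d := by
      rw [← hx, ← hy, Rmet_pt a hs0 hs1 ht0 ht1, if_neg hij]
    have hd0 : 0 ≤ d := add_nonneg (mul_nonneg (hpos i).le hs0) (mul_nonneg (hpos j).le ht0)
    rcases eq_or_lt_of_le hd0 with hdz | hdz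
    · -- d = 0 : both points are the origin
      have h1 : a i * s = 0 := by
        nlinarith [mul_nonneg (hpos i).le hs0, mul_nonneg (hpos j).le ht0]
      have h2 : a j * t = 0 := by
        nlinarith [mul_nonneg (hpos i).le hs0, mul_nonneg (hpos j).le ht0]
      have hs : s = 0 := by
        rcases mul_eq_zero.1 h1 with h' | h'
        · exact absurd h' (ne_of_gt (hpos i))
        · exact h'
      have ht : t = 0 := by
        rcases mul_eq_zero.1 h2 with h' | h'
        · exact absurd h' (ne_of_gt (hpos j))
        · exact h'
      have hxy : x = y := by rw [← hx, ← hy, hs, ht, Upt_zero, Upt_zero]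
      refine ⟨fun _ => x, rfl, ?_, ?_⟩
      · exact hxy
      intro r _ r' _
      show Rmet a x x = |r - r'| * Rmet a x y
      rw [Rmet_self, hdxy, ← hdz, mul_zero]
    · -- d > 0
      refine ⟨fun r => if r * d ≤ a i * s then Upt i (s - r * d / a i)
        else Upt j ((r * d - a i * s) / a j), ?_, ?_, ?_⟩
      · show (if (0:ℝ) * d ≤ a i * s then Upt i (s - 0 * d / a i)
          else Upt j ((0 * d - a i * s) / a j)) = x
        rw [if_pos (by rw [zero_mul]; exact mul_nonneg (hpos i).le hs0)]
        rw [zero_mul, zero_div, sub_zero, hx]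
      · show (if (1:ℝ) * d ≤ a i * s then Upt i (s - 1 * d / a i)
          else Upt j ((1 * d - a i * s) / a j)) = y
        have hai : a i ≠ 0 := ne_of_gt (hpos i)
        have haj : a j ≠ 0 := ne_of_gt (hpos j)
        by_cases h1 : 1 * d ≤ a i * s
        · have htz : t = 0 := by nlinarith [mul_nonneg (hpos j).le ht0, hpos j]
          rw [if_pos h1]
          have hds : d = a i * s := by rw [hd, htz]; ring
          have hz2 : s - 1 * d / a i = 0 := by rw [hds]; field_simp; ring
          rw [hz2, Upt_zero, ← hy, htz, Upt_zero]
        · rw [if_neg h1]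
          have hz2 : (1 * d - a i * s) / a j = t := by
            rw [hd]; field_simp; ring
          rw [hz2, hy]
      · -- main distance computation
        have key : ∀ r ∈ Set.Icc (0:ℝ) 1, ∀ r' ∈ Set.Icc (0:ℝ) 1, r ≤ r' →
            Rmet a ((fun r => if r * d ≤ a i * s then Upt i (s - r * d / a i)
              else Upt j ((r * d - a i * s) / a j)) r)
              ((fun r => if r * d ≤ a i * s then Upt i (s - r * d / a i)
              else Upt j ((r * d - a i * s) / a j)) r') = (r' - r) * d := by
          intro r hr r' hr' hrr'
          have hbd1 : ∀ u : ℝ, 0 ≤ u → u * d ≤ a i * s →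
              0 ≤ s - u * d / a i ∧ s - u * d / a i ≤ 1 := by
            intro u hu hc
            constructor
            · rw [sub_nonneg, div_le_iff₀ (hpos i)]
              linarith [hc]
            · have : 0 ≤ u * d / a i := div_nonneg (mul_nonneg hu hd0) (hpos i).le
              linarith
          have hbd2 : ∀ u : ℝ, u ≤ 1 → ¬ u * d ≤ a i * s →
              0 ≤ (u * d - a i * s) / a j ∧ (u * d - a i * s) / a j ≤ 1 := by
            intro u hu hc
            push_neg at hc
            constructor
            · exact div_nonneg (by linarith) (hpos j).le
            · rw [div_le_one (hpos j)]
              have : u * d ≤ 1 * d := mul_le_mul_of_nonneg_right hu hd0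
              have ht' : a j * t ≤ a j * 1 := mul_le_mul_of_nonneg_left ht1 (hpos j).le
              nlinarith
          by_cases c1 : r * d ≤ a i * s <;> by_cases c2 : r' * d ≤ a i * s
          · simp only [if_pos c1, if_pos c2]
            obtain ⟨e1, e2⟩ := hbd1 r hr.1 c1
            obtain ⟨e3, e4⟩ := hbd1 r' hr'.1 c2
            rw [Rmet_pt a e1 e2 e3 e4, if_pos rfl]
            rw [show s - r * d / a i - (s - r' * d / a i) = (r' - r) * d / a i by ring]
            rw [abs_of_nonneg (div_nonneg (mul_nonneg (by linarith) hd0) (hpos i).le)]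
            exact mul_div_cancel₀ _ (ne_of_gt (hpos i))
          · simp only [if_pos c1, if_neg c2]
            obtain ⟨e1, e2⟩ := hbd1 r hr.1 c1
            obtain ⟨e3, e4⟩ := hbd2 r' hr'.2 c2
            rw [Rmet_pt a e1 e2 e3 e4, if_neg hij]
            have hai : a i ≠ 0 := ne_of_gt (hpos i)
            have haj : a j ≠ 0 := ne_of_gt (hpos j)
            have e5 : a i * (s - r * d / a i) = a i * s - r * d := by
              field_simp
              all_goals ring
            have e6 : a j * ((r' * d - a i * s) / a j) = r' * d - a i * s := by
              field_simp
              all_goals ring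
            rw [e5, e6]; ring
          · exfalso
            push_neg at c1
            have : r * d ≤ r' * d := mul_le_mul_of_nonneg_right hrr' hd0
            linarith
          · simp only [if_neg c1, if_neg c2]
            obtain ⟨e1, e2⟩ := hbd2 r hr.2 c1
            obtain ⟨e3, e4⟩ := hbd2 r' hr'.2 c2
            rw [Rmet_pt a e1 e2 e3 e4, if_pos rfl]
            rw [show (r * d - a i * s) / a j - (r' * d - a i * s) / a j
              = -((r' - r) * d / a j) by ring, abs_neg]
            rw [abs_of_nonneg (div_nonneg (mul_nonneg (by linarith) hd0) (hpos j).le)]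
            exact mul_div_cancel₀ _ (ne_of_gt (hpos j))
        intro r hr r' hr'
        rcases le_total r r' with h | h
        · rw [key r hr r' hr' h, hdxy, abs_of_nonpos (by linarith)]
          ring
        · rw [Rmet_comm, key r' hr' r hr h, hdxy, abs_of_nonneg (by linarith)]


/-! ### Consequences of membership in `C` -/

lemma memC_pos {a : ℕ → ℝ} (ha : MemC a) : ∀ i, 0 < a i := by
  intro i
  rcases Nat.eq_zero_or_pos i with h | h
  · rw [h, ha.1]; norm_num
  · have h1 := (ha.2 i h).1
    have h2 : (0:ℝ) < 2 ^ (-(2 * (i:ℤ))) := zpow_pos (by norm_num) _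
    linarith

lemma memC_bound {a : ℕ → ℝ} (ha : MemC a) : ∀ i, a i ≤ 2 * (1/4:ℝ)^i := by
  intro i
  rcases Nat.eq_zero_or_pos i with h | h
  · rw [h, ha.1]; norm_num
  · have h2 := (ha.2 i h).2
    have e : (2:ℝ) ^ (-(2 * (i:ℤ)) + 1) = 2 * ((1/4:ℝ))^i := by
      rw [zpow_add₀ (by norm_num : (2:ℝ) ≠ 0), zpow_one, mul_comm]
      congr 1
      rw [show -(2*(i:ℤ)) = (-2) * i by ring, zpow_mul]
      rw [show (2:ℝ)^(-2:ℤ) = 1/4 by norm_num, zpow_natCast]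
    linarith

lemma ups_tb (a : ℕ → ℝ) (hpos : ∀ i, 0 < a i) (hbound : ∀ i, a i ≤ 2 * (1/4:ℝ)^i) :
    @TotallyBounded Upsilon (upsMS a hpos).toUniformSpace Set.univ := by
  letI := upsMS a hpos
  have hdist : ∀ p q : Upsilon, dist p q = Rmet a p q := upsMS_dist a hpos
  classical
  rw [Metric.totallyBounded_iff]
  intro ε hε
  obtain ⟨N, hN⟩ : ∃ N : ℕ, 2 * (1/4:ℝ)^N < ε := by
    obtain ⟨N, hN⟩ := exists_pow_lt_of_lt_one (show (0:ℝ) < ε/2 by linarith)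
      (show (1/4:ℝ) < 1 by norm_num)
    exact ⟨N, by linarith⟩
  set K : ℕ := ⌈(4:ℝ)/ε⌉₊ + 1 with hK
  refine ⟨↑((Finset.range (N+1) ×ˢ Finset.range K).image
    (fun ik => Upt ik.1 ((ik.2 : ℝ) * (ε/4)))), Finset.finite_toSet _, ?_⟩
  intro x _
  simp only [Set.mem_iUnion, Finset.coe_image, Set.mem_image, Finset.mem_coe,
    Finset.mem_product, Finset.mem_range, exists_prop, Metric.mem_ball]
  by_cases hiN : x.1.2 ≤ N
  · set i := x.1.2 with hi
    set s := x.1.1 with hs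
    have hs0 : 0 ≤ s := coord_nonneg x
    have hs1 : s ≤ 1 := coord_le_one x
    set k : ℕ := ⌊s / (ε/4)⌋₊ with hk
    have hε4 : (0:ℝ) < ε/4 := by linarith
    have hfl : (k:ℝ) ≤ s / (ε/4) := Nat.floor_le (div_nonneg hs0 hε4.le)
    have hk4 : (k:ℝ) * (ε/4) ≤ s := by
      rw [← le_div_iff₀ hε4]; exact hfl
    have hk5 : s - (k:ℝ) * (ε/4) < ε/4 := by
      have := Nat.lt_floor_add_one (s / (ε/4))
      have h2 : s < ((k:ℝ) + 1) * (ε/4) := by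
        rw [← div_lt_iff₀ hε4]; exact_mod_cast this
      linarith
    have hkK : k < K := by
      have h1 : (k:ℝ) ≤ 4/ε := by
        calc (k:ℝ) ≤ s / (ε/4) := hfl
        _ ≤ 1 / (ε/4) := by gcongr
        _ = 4/ε := one_div_div _ _
      have h2 : (k:ℝ) ≤ (⌈(4:ℝ)/ε⌉₊ : ℝ) := le_trans h1 (Nat.le_ceil _)
      have h3 : k ≤ ⌈(4:ℝ)/ε⌉₊ := by exact_mod_cast h2
      omega
    refine ⟨Upt i ((k:ℝ) * (ε/4)), ⟨⟨i, k⟩, ⟨⟨by omega, hkK⟩, rfl⟩⟩, ?_⟩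
    rw [hdist, ← Upt_self x, ← hi, ← hs,
      Rmet_pt a hs0 hs1 (by positivity) (le_trans hk4 hs1), if_pos rfl]
    rw [abs_of_nonneg (by linarith)]
    have hai : a i ≤ 2 := by
      calc a i ≤ 2 * (1/4:ℝ)^i := hbound i
      _ ≤ 2 * 1 := by
          have : (1/4:ℝ)^i ≤ 1 := pow_le_one₀ (by norm_num) (by norm_num)
          linarith
      _ = 2 := by ring
    nlinarith [hpos i, mul_nonneg (hpos i).le (show (0:ℝ) ≤ s - k * (ε/4) by linarith)]
  · refine ⟨Upt 0 ((0:ℕ) * (ε/4)), ⟨⟨0, 0⟩, ⟨⟨by omega, by omega⟩, rfl⟩⟩, ?_⟩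
    rw [show ((0:ℕ):ℝ) * (ε/4) = 0 by norm_num, Upt_zero, hdist, Rmet_o]
    calc a x.1.2 * x.1.1 ≤ a x.1.2 * 1 :=
      mul_le_mul_of_nonneg_left (coord_le_one x) (hpos _).le
    _ = a x.1.2 := mul_one _
    _ ≤ 2 * (1/4:ℝ)^(x.1.2) := hbound _
    _ ≤ 2 * (1/4:ℝ)^N := by
        have : (1/4:ℝ)^(x.1.2) ≤ (1/4:ℝ)^N :=
          pow_le_pow_of_le_one (by norm_num) (by norm_num) (by omega)
        linarith
    _ < ε := hN

lemma ups_complete (a : ℕ → ℝ) (hpos : ∀ i, 0 < a i) :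
    @CompleteSpace Upsilon (upsMS a hpos).toUniformSpace := by
  letI := upsMS a hpos
  have hdist : ∀ p q : Upsilon, dist p q = Rmet a p q := upsMS_dist a hpos
  apply Metric.complete_of_cauchySeq_tendsto
  intro u hu
  by_cases hc : ∀ ε > 0, ∀ N, ∃ n, N ≤ n ∧ dist (u n) UO < ε
  · refine ⟨UO, ?_⟩
    rw [Metric.tendsto_atTop]
    intro ε hε
    obtain ⟨N, hN⟩ := Metric.cauchySeq_iff.1 hu (ε/2) (by linarith)
    obtain ⟨n, hnN, hn⟩ := hc (ε/2) (by linarith) N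
    refine ⟨N, fun m hm => ?_⟩
    calc dist (u m) UO ≤ dist (u m) (u n) + dist (u n) UO := dist_triangle _ _ _
    _ < ε/2 + ε/2 := add_lt_add (hN m hm n hnN) hn
    _ = ε := by ring
  · push_neg at hc
    obtain ⟨ε, hε, N₀, hN₀⟩ := hc
    obtain ⟨N₁, hN₁⟩ := Metric.cauchySeq_iff.1 hu (2*ε) (by linarith)
    set N := max N₀ N₁ with hNdef
    set i := (u N).1.2 with hidef
    have hsame : ∀ n, N ≤ n → (u n).1.2 = i := by
      intro n hn
      by_contra hne
      have h2 : dist (u n) (u N) = a (u n).1.2 * (u n).1.1 + a (u N).1.2 * (u N).1.1 := by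
        rw [hdist, Rmet, if_neg hne]
      have l1 : ε ≤ a (u n).1.2 * (u n).1.1 := by
        have h3 := hN₀ n (le_trans (le_max_left _ _) hn)
        rwa [hdist, Rmet_o] at h3
      have l2 : ε ≤ a (u N).1.2 * (u N).1.1 := by
        have h3 := hN₀ N (le_max_left _ _)
        rwa [hdist, Rmet_o] at h3
      have l3 : dist (u n) (u N) < 2*ε :=
        hN₁ n (le_trans (le_max_right _ _) hn) N (le_max_right _ _)
      linarith
    have hCv : CauchySeq (fun n => (u (N + n)).1.1) := by
      rw [Metric.cauchySeq_iff]
      intro δ hδ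
      obtain ⟨M, hM⟩ := Metric.cauchySeq_iff.1 hu (δ * a i) (mul_pos hδ (hpos _))
      refine ⟨M, fun m hm n hn => ?_⟩
      have e1 : (u (N+m)).1.2 = i := hsame _ (Nat.le_add_right _ _)
      have e2 : (u (N+n)).1.2 = i := hsame _ (Nat.le_add_right _ _)
      have h4 : dist (u (N+m)) (u (N+n)) = a i * |(u (N+m)).1.1 - (u (N+n)).1.1| := by
        rw [hdist, Rmet, if_pos (e1.trans e2.symm), e1]
      have h3 := hM (N+m) (le_trans hm (Nat.le_add_left _ _)) (N+n)
        (le_trans hn (Nat.le_add_left _ _))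
      rw [h4] at h3
      rw [Real.dist_eq]
      nlinarith [hpos i, abs_nonneg ((u (N+m)).1.1 - (u (N+n)).1.1)]
    obtain ⟨ℓ, hℓ⟩ := cauchySeq_tendsto_of_complete hCv
    have hβ : ∀ n : ℕ, ε / a i ≤ (u (N+n)).1.1 ∧ (u (N+n)).1.1 ≤ 1 := by
      intro n
      have h3 := hN₀ (N+n) (le_trans (le_max_left _ _) (Nat.le_add_right _ _))
      rw [hdist, Rmet_o, hsame _ (Nat.le_add_right _ _)] at h3
      constructor
      · rw [div_le_iff₀ (hpos i)]
        linarith [h3]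
      · exact coord_le_one _
    have hℓpos : 0 < ℓ :=
      lt_of_lt_of_le (div_pos hε (hpos i))
        (ge_of_tendsto hℓ (Filter.Eventually.of_forall (fun n => (hβ n).1)))
    have hℓ1 : ℓ ≤ 1 :=
      le_of_tendsto hℓ (Filter.Eventually.of_forall (fun n => (hβ n).2))
    refine ⟨⟨(ℓ, i), Or.inr ⟨hℓpos, hℓ1⟩⟩, ?_⟩
    apply Metric.tendsto_atTop.2
    intro δ hδ
    obtain ⟨M, hM⟩ := Metric.tendsto_atTop.1 hℓ (δ / a i) (div_pos hδ (hpos i))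
    refine ⟨N + M, fun n hn => ?_⟩
    have e1 : (u n).1.2 = i := hsame n (le_trans (Nat.le_add_right _ _) hn)
    have hdx : dist (u n) (⟨(ℓ, i), Or.inr ⟨hℓpos, hℓ1⟩⟩ : Upsilon)
        = a i * |(u n).1.1 - ℓ| := by
      exact (hdist _ _).trans (by simp [Rmet, e1])
    obtain ⟨m, rfl⟩ : ∃ m, n = N + m := ⟨n - N, by omega⟩
    have h5 := hM m (by omega)
    rw [Real.dist_eq] at h5
    rw [hdx]
    have h6 : a i * |(u (N + m)).1.1 - ℓ| < a i * (δ / a i) :=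
      mul_lt_mul_of_pos_left h5 (hpos i)
    have hai : a i ≠ 0 := ne_of_gt (hpos i)
    have h7 : a i * (δ / a i) = δ := by field_simp
    linarith

/-- For every `a ∈ C` (with `a 0 = 1`), `R[a]` is a metric
on `Υ`, and the resulting metric space `(Υ, R[a])` is compact, geodesic, and
CAT(0). -/
theorem statement11 (a : ℕ → ℝ) (ha : MemC a) :
    ∃ M : MetricSpace Upsilon,
      (∀ p q : Upsilon, @dist Upsilon M.toPseudoMetricSpace.toDist p q = Rmet a p q) ∧
      @CompactSpace Upsilon
        M.toPseudoMetricSpace.toUniformSpace.toTopologicalSpace ∧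
      @IsGeodesicSpace Upsilon M ∧
      @IsCAT0Space Upsilon M := by
  have hpos : ∀ i, 0 < a i := memC_pos ha
  have hbound : ∀ i, a i ≤ 2 * (1/4:ℝ)^i := memC_bound ha
  refine ⟨upsMS a hpos, upsMS_dist a hpos, ?_, ?_, ?_⟩
  · -- compactness
    letI := upsMS a hpos
    constructor
    rw [isCompact_iff_totallyBounded_isComplete]
    exact ⟨ups_tb a hpos hbound, completeSpace_iff_isComplete_univ.1 (ups_complete a hpos)⟩
  · -- geodesic
    letI := upsMS a hpos
    intro x y
    obtain ⟨γ, hγ0, hγ1, hγ⟩ := exists_geo a hpos x y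
    exact ⟨γ, hγ0, hγ1, hγ⟩
  · -- CAT(0)
    letI := upsMS a hpos
    constructor
    · intro x y
      obtain ⟨γ, hγ0, hγ1, hγ⟩ := exists_geo a hpos x y
      exact ⟨γ, hγ0, hγ1, hγ⟩
    · intro x y z γ hγ0 hγ1 hγ t ht
      have hdd : ∀ p q : Upsilon, dist p q = Rmet a p q := fun _ _ => rfl
      have e1 : dist x (γ t) = t * dist x y := by
        have h := hγ 0 ⟨le_refl 0, zero_le_one⟩ t ht
        rw [hγ0] at h
        rw [h, zero_sub, abs_neg, abs_of_nonneg ht.1]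
      have e2 : dist (γ t) y = (1 - t) * dist x y := by
        have h := hγ t ht 1 ⟨zero_le_one, le_refl 1⟩
        rw [hγ1] at h
        rw [h, abs_of_nonpos (by linarith [ht.2] : t - 1 ≤ 0)]
        ring
      have h4 := Rmet_four a hpos z (γ t) x y
      rw [← hdd, ← hdd, ← hdd, ← hdd, ← hdd, ← hdd] at h4
      set M := dist z (γ t) with hM
      set b1 := dist z x with hb1
      set b2 := dist z y with hb2
      set d := dist x y with hd
      have hM0 : (0:ℝ) ≤ M := dist_nonneg
      have htr1 : b1 ≤ b2 + d := by
        calc b1 ≤ dist z y + dist y x := dist_triangle _ _ _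
        _ = b2 + d := by rw [dist_comm y x]
      have htr2 : b2 ≤ b1 + d := by
        calc b2 ≤ dist z x + dist x y := dist_triangle _ _ _
        _ = b1 + d := rfl
      have htr3 : d ≤ b1 + b2 := by
        calc d ≤ dist x z + dist z y := dist_triangle _ _ _
        _ = b1 + b2 := by rw [dist_comm x z]
      have h5 : M + d ≤ max (b1 + (1 - t) * d) (b2 + t * d) := by
        have hxy : dist (γ t) x = t * d := by rw [dist_comm]; exact e1
        calc M + d = dist z (γ t) + dist x y := rfl
        _ ≤ max (dist z x + dist (γ t) y) (dist z y + dist (γ t) x) := h4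
        _ = max (b1 + (1 - t) * d) (b2 + t * d) := by rw [e2, hxy]
      rcases le_max_iff.1 h5 with h | h
      · have hα : M ≤ b1 - t * d := by linarith
        nlinarith [mul_nonneg (sub_nonneg.2 hα) (by linarith : (0:ℝ) ≤ b1 - t * d + M),
          mul_nonneg ht.1 (mul_nonneg (by linarith : (0:ℝ) ≤ b2 - b1 + d)
            (by linarith : (0:ℝ) ≤ b1 + b2 - d))]
      · have hα : M ≤ b2 - (1 - t) * d := by linarith
        nlinarith [mul_nonneg (sub_nonneg.2 hα)
            (by linarith : (0:ℝ) ≤ b2 - (1 - t) * d + M),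
          mul_nonneg (by linarith [ht.2] : (0:ℝ) ≤ 1 - t)
            (mul_nonneg (by linarith : (0:ℝ) ≤ b1 - b2 + d)
              (by linarith : (0:ℝ) ≤ b1 + b2 - d))]
end

section
/- Let X and Y be Hausdorff topological spaces with no isolated points. Then every subset of the product space X × Y that is homeomorphic to ℝ (a topological arc) has empty interior in X × Y. -/
open Set

/-- A product of two preconnected sets minus a point is preconnected, provided
each factor has a second point. -/
lemma preconn_prod_diff {α β : Type*} [TopologicalSpace α] [TopologicalSpace β]
    {P : Set α} {Q : Set β} (hP : IsPreconnected P) (hQ : IsPreconnected Q)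
    {x x' : α} {y y' : β} (hx' : x' ∈ P) (hy' : y' ∈ Q)
    (hxx : x' ≠ x) (hyy : y' ≠ y) :
    IsPreconnected ((P ×ˢ Q) \ {(x, y)}) := by
  apply isPreconnected_of_forall (x', y')
  rintro ⟨a, b⟩ ⟨⟨haP, hbQ⟩, hz⟩
  by_cases hb : b = y
  · -- then a ≠ x
    have ha : a ≠ x := by
      intro h; exact hz (by simp [h, hb])
    refine ⟨({a} ×ˢ Q) ∪ (P ×ˢ {y'}), ?_, ?_, ?_, ?_⟩
    · rintro ⟨c, d⟩ (⟨hc, hd⟩ | ⟨hc, hd⟩)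
      · refine ⟨⟨?_, hd⟩, ?_⟩
        · simp only [mem_singleton_iff] at hc; exact hc ▸ haP
        · simp only [mem_singleton_iff] at hc
          intro h
          rw [mem_singleton_iff, Prod.mk.injEq] at h
          exact ha (hc.symm.trans h.1)
      · refine ⟨⟨hc, ?_⟩, ?_⟩
        · simp only [mem_singleton_iff] at hd; exact hd ▸ hy'
        · simp only [mem_singleton_iff] at hd
          intro h
          rw [mem_singleton_iff, Prod.mk.injEq] at h
          exact hyy (hd.symm.trans h.2)
    · exact Or.inr ⟨hx', rfl⟩
    · exact Or.inl ⟨rfl, hbQ⟩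
    · exact IsPreconnected.union (a, y')
        (by exact ⟨rfl, hy'⟩) (by exact ⟨haP, rfl⟩)
        (isPreconnected_singleton.prod hQ) (hP.prod isPreconnected_singleton)
  · refine ⟨({x'} ×ˢ Q) ∪ (P ×ˢ {b}), ?_, ?_, ?_, ?_⟩
    · rintro ⟨c, d⟩ (⟨hc, hd⟩ | ⟨hc, hd⟩)
      · refine ⟨⟨?_, hd⟩, ?_⟩
        · simp only [mem_singleton_iff] at hc; exact hc ▸ hx'
        · simp only [mem_singleton_iff] at hc
          intro h
          rw [mem_singleton_iff, Prod.mk.injEq] at h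
          exact hxx (hc.symm.trans h.1)
      · refine ⟨⟨hc, ?_⟩, ?_⟩
        · simp only [mem_singleton_iff] at hd; exact hd ▸ hbQ
        · simp only [mem_singleton_iff] at hd
          intro h
          rw [mem_singleton_iff, Prod.mk.injEq] at h
          exact hb (hd.symm.trans h.2)
    · exact Or.inl ⟨rfl, hy'⟩
    · exact Or.inr ⟨haP, rfl⟩
    · exact IsPreconnected.union (x', b)
        (by exact ⟨rfl, hbQ⟩) (by exact ⟨hx', rfl⟩)
        (isPreconnected_singleton.prod hQ) (hP.prod isPreconnected_singleton)

/-- Let `X` and `Y` be Hausdorff topological spaces with no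
isolated points.  Then every subset of `X × Y` homeomorphic to `ℝ` (a
topological arc) has empty interior in `X × Y`. -/
theorem statement16 {X Y : Type*} [TopologicalSpace X] [TopologicalSpace Y]
    [T2Space X] [T2Space Y]
    (hX : ∀ x : X, ¬ IsOpen ({x} : Set X))
    (hY : ∀ y : Y, ¬ IsOpen ({y} : Set Y))
    (A : Set (X × Y)) (hA : Nonempty (↥A ≃ₜ ℝ)) :
    interior A = ∅ := by
  by_contra hne
  obtain ⟨p, hp⟩ := Set.nonempty_iff_ne_empty.mpr hne
  obtain ⟨f⟩ := hA
  have hpA : p ∈ A := interior_subset hp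
  set φ : ℝ → X × Y := fun r => (f.symm r : X × Y) with hφdef
  have hφcont : Continuous φ := continuous_subtype_val.comp f.symm.continuous
  have hφinj : Function.Injective φ :=
    Subtype.val_injective.comp f.symm.injective
  set S : Set ℝ := f '' (Subtype.val ⁻¹' interior A) with hSdef
  have hSopen : IsOpen S :=
    f.isOpenMap _ (isOpen_interior.preimage continuous_subtype_val)
  have hφS : φ '' S = interior A := by
    rw [hSdef, hφdef]
    rw [← Set.image_comp]
    have : (fun r => (f.symm r : X × Y)) ∘ f = Subtype.val := by
      funext a; simp
    rw [this]
    rw [Subtype.image_preimage_coe]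
    exact Set.inter_eq_right.mpr interior_subset
  -- key open-mapping property
  have hopen : ∀ O : Set ℝ, IsOpen O → O ⊆ S → IsOpen (φ '' O) := by
    intro O hO hOS
    have h1 : IsOpen (f.symm '' O) := f.symm.isOpenMap _ hO
    obtain ⟨G, hG, hGeq⟩ := isOpen_induced_iff.mp h1
    have h2 : φ '' O = Subtype.val '' (f.symm '' O) := by
      rw [hφdef, ← Set.image_comp]; rfl
    have h3 : Subtype.val '' (f.symm '' O) = G ∩ A := by
      rw [← hGeq, Subtype.image_preimage_coe]; exact Set.inter_comm _ _
    have h4 : φ '' O ⊆ interior A := by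
      rw [← hφS]; exact Set.image_mono hOS
    have h5 : φ '' O = G ∩ interior A := by
      ext z
      constructor
      · intro hz
        have hz' : z ∈ G ∩ A := by rw [h2, h3] at hz; exact hz
        exact ⟨hz'.1, h4 hz⟩
      · intro hz
        rw [h2, h3]
        exact ⟨hz.1, interior_subset hz.2⟩
    rw [h5]; exact hG.inter isOpen_interior
  -- the point t
  set t : ℝ := f ⟨p, hpA⟩ with htdef
  have htS : t ∈ S := ⟨⟨p, hpA⟩, hp, rfl⟩
  have hφt : φ t = p := by simp [hφdef, htdef]
  obtain ⟨δ, hδpos, hball⟩ := Metric.isOpen_iff.mp hSopen t htS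
  rw [Real.ball_eq_Ioo] at hball
  set K : Set ℝ := Ioo (t - δ) (t + δ) with hKdef
  have htK : t ∈ K := by constructor <;> simp [hδpos] <;> linarith
  have hW0open : IsOpen (φ '' K) := hopen K isOpen_Ioo hball
  have hpW0 : p ∈ φ '' K := ⟨t, htK, hφt⟩
  obtain ⟨U, V, hU, hV, hpU, hpV, hUV⟩ :=
    isOpen_prod_iff.mp hW0open p.1 p.2 (by simpa using hpW0)
  -- shrink to K' inside φ ⁻¹ (U ×ˢ V)
  have hO2 : IsOpen (φ ⁻¹' (U ×ˢ V) ∩ K) :=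
    ((hU.prod hV).preimage hφcont).inter isOpen_Ioo
  have htO2 : t ∈ φ ⁻¹' (U ×ˢ V) ∩ K := by
    refine ⟨?_, htK⟩
    rw [Set.mem_preimage, hφt]; exact ⟨hpU, hpV⟩
  obtain ⟨δ', hδ'pos, hball'⟩ := Metric.isOpen_iff.mp hO2 t htO2
  rw [Real.ball_eq_Ioo] at hball'
  set K' : Set ℝ := Ioo (t - δ') (t + δ') with hK'def
  have hK'K : K' ⊆ K := fun s hs => (hball' hs).2
  have hK'UV : φ '' K' ⊆ U ×ˢ V := by
    intro z ⟨s, hs, hz⟩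
    exact hz ▸ (hball' hs).1
  set P' : Set X := Prod.fst '' (φ '' K') with hP'def
  set Q' : Set Y := Prod.snd '' (φ '' K') with hQ'def
  have hW'open : IsOpen (φ '' K') := hopen K' isOpen_Ioo (hK'K.trans hball)
  have hP'open : IsOpen P' := isOpenMap_fst _ hW'open
  have hQ'open : IsOpen Q' := isOpenMap_snd _ hW'open
  have htK' : t ∈ K' := by constructor <;> simp [hδ'pos] <;> linarith
  have hpW' : p ∈ φ '' K' := ⟨t, htK', hφt⟩
  have hxP' : p.1 ∈ P' := ⟨p, hpW', rfl⟩
  have hyQ' : p.2 ∈ Q' := ⟨p, hpW', rfl⟩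
  -- second points
  obtain ⟨x', hx'P, hx'ne⟩ : ∃ x' ∈ P', x' ≠ p.1 := by
    by_contra h
    push_neg at h
    apply hX p.1
    have : P' = {p.1} := Set.Subset.antisymm (fun z hz => h z hz) (by simpa using hxP')
    exact this ▸ hP'open
  obtain ⟨y', hy'Q, hy'ne⟩ : ∃ y' ∈ Q', y' ≠ p.2 := by
    by_contra h
    push_neg at h
    apply hY p.2
    have : Q' = {p.2} := Set.Subset.antisymm (fun z hz => h z hz) (by simpa using hyQ')
    exact this ▸ hQ'open
  -- the connected set C
  set C : Set (X × Y) := (P' ×ˢ Q') \ {p} with hCdef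
  have hW'pre : IsPreconnected (φ '' K') :=
    (isPreconnected_Ioo).image φ hφcont.continuousOn
  have hP'pre : IsPreconnected P' :=
    hW'pre.image Prod.fst continuous_fst.continuousOn
  have hQ'pre : IsPreconnected Q' :=
    hW'pre.image Prod.snd continuous_snd.continuousOn
  have hCpre : IsPreconnected C := by
    have h := preconn_prod_diff hP'pre hQ'pre hx'P hy'Q hx'ne hy'ne
    have : ({(p.1, p.2)} : Set (X × Y)) = {p} := by simp
    rw [this] at h
    exact h
  -- the two halves
  set L : Set (X × Y) := φ '' Ioo (t - δ) t with hLdef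
  set R : Set (X × Y) := φ '' Ioo t (t + δ) with hRdef
  have hLsub : Ioo (t - δ) t ⊆ K := fun s hs => ⟨hs.1, by linarith [hs.2]⟩
  have hRsub : Ioo t (t + δ) ⊆ K := fun s hs => ⟨by linarith [hs.1], hs.2⟩
  have hLopen : IsOpen L := hopen _ isOpen_Ioo (hLsub.trans hball)
  have hRopen : IsOpen R := hopen _ isOpen_Ioo (hRsub.trans hball)
  have hP'U : P' ⊆ U := by
    rintro _ ⟨z, hz, rfl⟩
    exact (hK'UV hz).1
  have hQ'V : Q' ⊆ V := by
    rintro _ ⟨z, hz, rfl⟩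
    exact (hK'UV hz).2
  have hCLR : C ⊆ L ∪ R := by
    rintro z ⟨⟨hz1, hz2⟩, hzp⟩
    have : z ∈ φ '' K := hUV ⟨hP'U hz1, hQ'V hz2⟩
    obtain ⟨s, hsK, rfl⟩ := this
    rcases lt_trichotomy s t with h | h | h
    · exact Or.inl ⟨s, ⟨hsK.1, h⟩, rfl⟩
    · exact absurd (h ▸ hφt) (fun hh => hzp (by simp [hh]))
    · exact Or.inr ⟨s, ⟨h, hsK.2⟩, rfl⟩
  have hsubC : φ '' K' \ {p} ⊆ C := by
    rintro z ⟨hz, hzp⟩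
    exact ⟨⟨⟨z, hz, rfl⟩, ⟨z, hz, rfl⟩⟩, hzp⟩
  have hφne : ∀ s : ℝ, s ≠ t → φ s ≠ p := by
    intro s hs h
    exact hs (hφinj (h.trans hφt.symm))
  have hCside : ∀ s : ℝ, s ∈ K' → s ≠ t → φ s ∈ C := by
    intro s hs hst
    exact hsubC ⟨⟨s, hs, rfl⟩, hφne s hst⟩
  have hmemK' : ∀ s : ℝ, s ∈ K' → s ∈ K := hK'K
  have hCL : (C ∩ L).Nonempty := by
    have hs1 : t - δ' / 2 ∈ K' := ⟨by linarith, by linarith⟩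
    refine ⟨φ (t - δ' / 2), hCside _ hs1 (by linarith), ?_⟩
    exact ⟨t - δ' / 2, ⟨(hmemK' _ hs1).1, by linarith⟩, rfl⟩
  have hCR : (C ∩ R).Nonempty := by
    have hs1 : t + δ' / 2 ∈ K' := ⟨by linarith, by linarith⟩
    refine ⟨φ (t + δ' / 2), hCside _ hs1 (by linarith), ?_⟩
    exact ⟨t + δ' / 2, ⟨by linarith, (hmemK' _ hs1).2⟩, rfl⟩
  obtain ⟨z, _, hzL, hzR⟩ := hCpre L R hLopen hRopen hCLR hCL hCR
  obtain ⟨s1, hs1, rfl⟩ := hzL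
  obtain ⟨s2, hs2, heq⟩ := hzR
  have : s2 = s1 := hφinj heq
  rw [this] at hs2
  exact absurd rfl (ne_of_lt (hs1.2.trans hs2.1))
end
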